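/- Let k ≥ 2 be an even integer and let Δ ≥ 4k be a power of 2 such that Δ/k is a power of 2 and log₂(Δ/k) ≥ 1. Define the measure A on ℤ assigning mass 2 to each of the points 2jΔ/k for j = 1, …, k/2 (and mass 0 elsewhere). Let 𝒞 be any family of finitely supported nonnegative measures on ℤ, each of total mass k and support size at most k, such that every finitely supported nonnegative measure B on ℤ with total mass k, support size at most k, and EMD(A, B) ≤ k/2 satisfies EMD(B, c) ≤ k/200 for some c ∈ 𝒞. Then |𝒞| ≥ (log₂(Δ/k))^{9k/20} / 2^k. -/

import Mathlib

open scoped Classical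

/-- Earth Mover's Distance between two finitely supported nonnegative measures on `ℤ`
of equal total mass: the infimum over finitely supported couplings `π` (with row
marginals `y` and column marginals `y'`) of `Σ_{i,j} π(i,j) |i − j|`. -/
noncomputable def EMDZ (y y' : ℤ →₀ ℝ) : ℝ :=
  sInf {c : ℝ | ∃ π : (ℤ × ℤ) →₀ ℝ,
    (∀ p, 0 ≤ π p) ∧
    (∀ i : ℤ, (π.sum fun p v => if p.1 = i then v else 0) = y i) ∧
    (∀ j : ℤ, (π.sum fun p v => if p.2 = j then v else 0) = y' j) ∧
    c = π.sum fun p v => v * |(p.1 : ℝ) - (p.2 : ℝ)|}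

namespace Stmt17

noncomputable def bump (c h x : ℝ) : ℝ := max 0 (h - |x - c|)

lemma bump_nonneg (c h x : ℝ) : 0 ≤ bump c h x := le_max_left _ _

lemma bump_eq_zero {c h x : ℝ} (hx : h ≤ |x - c|) : bump c h x = 0 :=
  max_eq_left (by linarith)

lemma bump_pos_eq {c h x : ℝ} (hx : 0 < bump c h x) : bump c h x = h - |x - c| := by
  rcases lt_max_iff.mp hx with h1 | h1
  · exact absurd h1 (lt_irrefl _)
  · exact max_eq_right h1.le

lemma abs_lt_of_bump_pos {c h x : ℝ} (hx : 0 < bump c h x) : |x - c| < h := by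
  rcases lt_max_iff.mp hx with h1 | h1
  · exact absurd h1 (lt_irrefl _)
  · linarith

lemma lip_sum {ι : Type*} (s : Finset ι) (σ c h : ι → ℝ)
    (hσ : ∀ i ∈ s, |σ i| ≤ 1)
    (hdisj : ∀ i ∈ s, ∀ j ∈ s, i ≠ j → c i + h i ≤ c j - h j ∨ c j + h j ≤ c i - h i)
    (x y : ℝ) :
    |(∑ i ∈ s, σ i * bump (c i) (h i) x) - ∑ i ∈ s, σ i * bump (c i) (h i) y| ≤ |x - y| := by
  classical
  have key : ∀ z : ℝ, ∀ p ∈ s, 0 < bump (c p) (h p) z →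
      (∑ i ∈ s, σ i * bump (c i) (h i) z) = σ p * bump (c p) (h p) z := by
    intro z p hp hpz
    refine Finset.sum_eq_single_of_mem p hp ?_
    intro i hi hip
    have hzp := abs_lt_of_bump_pos hpz
    have hzp1 : z - c p ≤ |z - c p| := le_abs_self _
    have hzp2 : -(z - c p) ≤ |z - c p| := neg_le_abs _
    have : bump (c i) (h i) z = 0 := by
      rcases hdisj p hp i hi (Ne.symm hip) with hd | hd
      · refine bump_eq_zero ?_
        have : h i ≤ c i - z := by linarith
        calc h i ≤ c i - z := this
          _ ≤ |c i - z| := le_abs_self _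
          _ = |z - c i| := abs_sub_comm _ _
      · refine bump_eq_zero ?_
        have : h i ≤ z - c i := by linarith
        exact this.trans (le_abs_self _)
    rw [this, mul_zero]
  have hzero : ∀ z : ℝ, (¬ ∃ p ∈ s, 0 < bump (c p) (h p) z) →
      (∑ i ∈ s, σ i * bump (c i) (h i) z) = 0 := by
    intro z hz
    push_neg at hz
    refine Finset.sum_eq_zero fun i hi => ?_
    have : bump (c i) (h i) z = 0 := le_antisymm (hz i hi) (bump_nonneg _ _ _)
    rw [this, mul_zero]
  by_cases hx : ∃ p ∈ s, 0 < bump (c p) (h p) x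
  · obtain ⟨p, hp, hpx⟩ := hx
    have hFx := key x p hp hpx
    have hbx := bump_pos_eq hpx
    by_cases hy : ∃ q ∈ s, 0 < bump (c q) (h q) y
    · obtain ⟨q, hq, hqy⟩ := hy
      have hFy := key y q hq hqy
      have hby := bump_pos_eq hqy
      rw [hFx, hFy]
      by_cases hpq : p = q
      · subst hpq
        rw [← mul_sub, abs_mul]
        have h2 : |bump (c p) (h p) x - bump (c p) (h p) y| ≤ |x - y| := by
          rw [hbx, hby]
          have e : (h p - |x - c p|) - (h p - |y - c p|) = |y - c p| - |x - c p| := by ring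
          rw [e]
          calc |(|y - c p| - |x - c p|)| ≤ |(y - c p) - (x - c p)| := abs_abs_sub_abs_le_abs_sub _ _
            _ = |y - x| := by ring_nf
            _ = |x - y| := abs_sub_comm _ _
        calc |σ p| * |bump (c p) (h p) x - bump (c p) (h p) y|
            ≤ 1 * |bump (c p) (h p) x - bump (c p) (h p) y| :=
              mul_le_mul_of_nonneg_right (hσ p hp) (abs_nonneg _)
          _ = |bump (c p) (h p) x - bump (c p) (h p) y| := one_mul _
          _ ≤ |x - y| := h2
      · have habs : |σ p * bump (c p) (h p) x - σ q * bump (c q) (h q) y|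
            ≤ bump (c p) (h p) x + bump (c q) (h q) y := by
          calc |σ p * bump (c p) (h p) x - σ q * bump (c q) (h q) y|
              ≤ |σ p * bump (c p) (h p) x| + |σ q * bump (c q) (h q) y| := abs_sub _ _
            _ = |σ p| * |bump (c p) (h p) x| + |σ q| * |bump (c q) (h q) y| := by
                rw [abs_mul, abs_mul]
            _ ≤ 1 * |bump (c p) (h p) x| + 1 * |bump (c q) (h q) y| := by
                gcongr
                · exact hσ p hp
                · exact hσ q hq
            _ = bump (c p) (h p) x + bump (c q) (h q) y := by
                rw [one_mul, one_mul, abs_of_nonneg (bump_nonneg _ _ _),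
                  abs_of_nonneg (bump_nonneg _ _ _)]
        have hx1 : x - c p ≤ |x - c p| := le_abs_self _
        have hx2 : -(x - c p) ≤ |x - c p| := neg_le_abs _
        have hy1 : y - c q ≤ |y - c q| := le_abs_self _
        have hy2 : -(y - c q) ≤ |y - c q| := neg_le_abs _
        rcases hdisj p hp q hq hpq with hd | hd
        · have : bump (c p) (h p) x + bump (c q) (h q) y ≤ y - x := by
            rw [hbx, hby]; linarith
          have h3 : y - x ≤ |x - y| := by rw [abs_sub_comm]; exact le_abs_self _
          linarith [habs]
        · have : bump (c p) (h p) x + bump (c q) (h q) y ≤ x - y := by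
            rw [hbx, hby]; linarith
          have h3 : x - y ≤ |x - y| := le_abs_self _
          linarith [habs]
    · have hFy := hzero y hy
      push_neg at hy
      have hbyp : bump (c p) (h p) y = 0 := le_antisymm (hy p hp) (bump_nonneg _ _ _)
      have hpy : h p ≤ |y - c p| := by
        by_contra hc
        push_neg at hc
        have : 0 < bump (c p) (h p) y := lt_max_iff.mpr (Or.inr (by linarith))
        rw [hbyp] at this; exact lt_irrefl _ this
      rw [hFx, hFy, sub_zero, abs_mul, abs_of_nonneg (bump_nonneg _ _ _)]
      have h4 : bump (c p) (h p) x ≤ |x - y| := by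
        rw [hbx]
        have := abs_sub_abs_le_abs_sub (y - c p) (x - c p)
        have e : (y - c p) - (x - c p) = y - x := by ring
        rw [e] at this
        have e2 : |y - x| = |x - y| := abs_sub_comm _ _
        linarith [hpy]
      calc |σ p| * bump (c p) (h p) x ≤ 1 * bump (c p) (h p) x :=
            mul_le_mul_of_nonneg_right (hσ p hp) (bump_nonneg _ _ _)
        _ = bump (c p) (h p) x := one_mul _
        _ ≤ |x - y| := h4
  · have hFx := hzero x hx
    push_neg at hx
    by_cases hy : ∃ q ∈ s, 0 < bump (c q) (h q) y
    · obtain ⟨q, hq, hqy⟩ := hy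
      have hFy := key y q hq hqy
      have hby := bump_pos_eq hqy
      have hbxq : bump (c q) (h q) x = 0 := le_antisymm (hx q hq) (bump_nonneg _ _ _)
      have hqx : h q ≤ |x - c q| := by
        by_contra hc
        push_neg at hc
        have : 0 < bump (c q) (h q) x := lt_max_iff.mpr (Or.inr (by linarith))
        rw [hbxq] at this; exact lt_irrefl _ this
      rw [hFx, hFy, zero_sub, abs_neg, abs_mul, abs_of_nonneg (bump_nonneg _ _ _)]
      have h4 : bump (c q) (h q) y ≤ |x - y| := by
        rw [hby]
        have := abs_sub_abs_le_abs_sub (x - c q) (y - c q)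
        have e : (x - c q) - (y - c q) = x - y := by ring
        rw [e] at this
        linarith [hqx]
      calc |σ q| * bump (c q) (h q) y ≤ 1 * bump (c q) (h q) y :=
            mul_le_mul_of_nonneg_right (hσ q hq) (bump_nonneg _ _ _)
        _ = bump (c q) (h q) y := one_mul _
        _ ≤ |x - y| := h4
    · rw [hFx, hzero y hy, sub_zero, abs_zero]
      exact abs_nonneg _



lemma emdz_le (y y' : ℤ →₀ ℝ) (π : (ℤ × ℤ) →₀ ℝ)
    (hπ0 : ∀ p, 0 ≤ π p)
    (h1 : ∀ i, (π.sum fun p v => if p.1 = i then v else 0) = y i)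
    (h2 : ∀ j, (π.sum fun p v => if p.2 = j then v else 0) = y' j) :
    EMDZ y y' ≤ π.sum fun p v => v * |(p.1 : ℝ) - (p.2 : ℝ)| := by
  apply csInf_le
  · refine ⟨0, ?_⟩
    rintro x ⟨ρ, hρ0, _, _, rfl⟩
    exact Finset.sum_nonneg fun p _ => mul_nonneg (hρ0 p) (abs_nonneg _)
  · exact ⟨π, hπ0, h1, h2, rfl⟩

lemma marg_proj (π : (ℤ × ℤ) →₀ ℝ) (y : ℤ →₀ ℝ) (g : ℤ × ℤ → ℤ)
    (h : ∀ i, (π.sum fun p v => if g p = i then v else 0) = y i) (F : ℤ → ℝ) :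
    (π.sum fun p v => F (g p) * v) = y.sum fun i v => F i * v := by
  classical
  set S := π.support.image g with hS
  have hsub : y.support ⊆ S := by
    intro i hi
    by_contra hiS
    have hz : (π.sum fun p v => if g p = i then v else 0) = 0 := by
      apply Finset.sum_eq_zero
      intro p hp
      have : g p ≠ i := fun e => hiS (Finset.mem_image.mpr ⟨p, hp, e⟩)
      simp [this]
    rw [h i] at hz
    exact (Finsupp.mem_support_iff.mp hi) hz
  have hy : (y.sum fun i v => F i * v) = ∑ i ∈ S, F i * y i := by
    rw [Finsupp.sum]
    refine Finset.sum_subset hsub fun i _ hiy => ?_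
    rw [Finsupp.notMem_support_iff.mp hiy, mul_zero]
  rw [hy]
  have hterm : ∀ i ∈ S, F i * y i = ∑ p ∈ π.support, (if g p = i then F i * π p else 0) := by
    intro i _
    rw [← h i, Finsupp.sum, Finset.mul_sum]
    refine Finset.sum_congr rfl fun p _ => ?_
    split_ifs <;> simp
  rw [Finset.sum_congr rfl hterm, Finset.sum_comm]
  rw [Finsupp.sum]
  refine Finset.sum_congr rfl fun p hp => ?_
  have hpS : g p ∈ S := Finset.mem_image_of_mem _ hp
  rw [Finset.sum_ite_eq S (g p) (fun i => F i * π p), if_pos hpS]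

lemma exists_coupling (y y' : ℤ →₀ ℝ) (m : ℝ) (hm : 0 < m)
    (hy : ∀ z, 0 ≤ y z) (hy' : ∀ z, 0 ≤ y' z)
    (hmy : (y.sum fun _ v => v) = m) (hmy' : (y'.sum fun _ v => v) = m) :
    ∃ π : (ℤ × ℤ) →₀ ℝ, (∀ p, 0 ≤ π p) ∧
      (∀ i : ℤ, (π.sum fun p v => if p.1 = i then v else 0) = y i) ∧
      (∀ j : ℤ, (π.sum fun p v => if p.2 = j then v else 0) = y' j) := by
  classical
  have hfsupp : ∀ p : ℤ × ℤ, (fun p : ℤ × ℤ => y p.1 * y' p.2 / m) p ≠ 0 →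
      p ∈ y.support ×ˢ y'.support := by
    intro p hp
    rw [Finset.mem_product]
    constructor
    · rw [Finsupp.mem_support_iff]
      intro h0; apply hp; show y p.1 * y' p.2 / m = 0; rw [h0, zero_mul, zero_div]
    · rw [Finsupp.mem_support_iff]
      intro h0; apply hp; show y p.1 * y' p.2 / m = 0; rw [h0, mul_zero, zero_div]
  refine ⟨Finsupp.onFinset (y.support ×ˢ y'.support) (fun p => y p.1 * y' p.2 / m) hfsupp, ?_, ?_, ?_⟩
  · intro p
    exact div_nonneg (mul_nonneg (hy _) (hy' _)) hm.le
  · intro i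
    have hsum : (Finsupp.onFinset (y.support ×ˢ y'.support) (fun p => y p.1 * y' p.2 / m) hfsupp).sum
        (fun p v => if p.1 = i then v else 0)
        = ∑ p ∈ y.support ×ˢ y'.support, (if p.1 = i then y p.1 * y' p.2 / m else 0) := by
      rw [Finsupp.sum]
      refine Finset.sum_subset Finsupp.support_onFinset_subset fun p _ hps => ?_
      rw [Finsupp.notMem_support_iff.mp hps]
      simp
    rw [hsum, Finset.sum_product]
    have : ∀ a ∈ y.support, (∑ c ∈ y'.support, if (a, c).1 = i then y a * y' c / m else 0)
        = if a = i then y a else 0 := by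
      intro a _
      by_cases hai : a = i
      · subst hai
        rw [if_pos rfl]
        have e : ∀ c ∈ y'.support, (if ((a, c).1 = a) then y a * y' c / m else 0)
            = y a * y' c / m := fun c _ => if_pos rfl
        rw [Finset.sum_congr rfl e, ← Finset.sum_div, ← Finset.mul_sum,
          show (∑ c ∈ y'.support, y' c) = m from hmy', mul_div_cancel_right₀ _ hm.ne']
      · rw [if_neg hai]
        exact Finset.sum_eq_zero fun c _ => if_neg (by simpa using hai)
    rw [Finset.sum_congr rfl this, Finset.sum_ite_eq' y.support i (fun a => y a)]
    by_cases hi : i ∈ y.support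
    · rw [if_pos hi]
    · rw [if_neg hi, (Finsupp.notMem_support_iff.mp hi)]
  · intro j
    have hsum : (Finsupp.onFinset (y.support ×ˢ y'.support) (fun p => y p.1 * y' p.2 / m) hfsupp).sum
        (fun p v => if p.2 = j then v else 0)
        = ∑ p ∈ y.support ×ˢ y'.support, (if p.2 = j then y p.1 * y' p.2 / m else 0) := by
      rw [Finsupp.sum]
      refine Finset.sum_subset Finsupp.support_onFinset_subset fun p _ hps => ?_
      rw [Finsupp.notMem_support_iff.mp hps]
      simp
    rw [hsum, Finset.sum_product_right]
    have : ∀ c ∈ y'.support, (∑ a ∈ y.support, if (a, c).2 = j then y a * y' c / m else 0)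
        = if c = j then y' c else 0 := by
      intro c _
      by_cases hcj : c = j
      · subst hcj
        rw [if_pos rfl]
        have e : ∀ a ∈ y.support, (if ((a, c).2 = c) then y a * y' c / m else 0)
            = y a * y' c / m := fun a _ => if_pos rfl
        rw [Finset.sum_congr rfl e, ← Finset.sum_div, ← Finset.sum_mul,
          show (∑ a ∈ y.support, y a) = m from hmy, mul_comm,
          mul_div_cancel_right₀ _ hm.ne']
      · rw [if_neg hcj]
        exact Finset.sum_eq_zero fun a _ => if_neg (by simpa using hcj)
    rw [Finset.sum_congr rfl this, Finset.sum_ite_eq' y'.support j (fun c => y' c)]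
    by_cases hj : j ∈ y'.support
    · rw [if_pos hj]
    · rw [if_neg hj, (Finsupp.notMem_support_iff.mp hj)]

lemma dual_le_emdz (y y' : ℤ →₀ ℝ) (F : ℤ → ℝ) (m : ℝ) (hm : 0 < m)
    (hy : ∀ z, 0 ≤ y z) (hy' : ∀ z, 0 ≤ y' z)
    (hmy : (y.sum fun _ v => v) = m) (hmy' : (y'.sum fun _ v => v) = m)
    (hF : ∀ i j : ℤ, |F i - F j| ≤ |(i : ℝ) - (j : ℝ)|) :
    (y.sum fun i v => F i * v) - (y'.sum fun i v => F i * v) ≤ EMDZ y y' := by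
  apply le_csInf
  · obtain ⟨π, h0, h1, h2⟩ := exists_coupling y y' m hm hy hy' hmy hmy'
    exact ⟨_, π, h0, h1, h2, rfl⟩
  · rintro x ⟨π, h0, h1, h2, rfl⟩
    rw [← marg_proj π y Prod.fst h1 F, ← marg_proj π y' Prod.snd h2 F]
    rw [Finsupp.sum, Finsupp.sum, Finsupp.sum, ← Finset.sum_sub_distrib]
    refine Finset.sum_le_sum fun p _ => ?_
    have e : F p.1 * π p - F p.2 * π p = (F p.1 - F p.2) * π p := by ring
    rw [e]
    calc (F p.1 - F p.2) * π p ≤ |F p.1 - F p.2| * π p :=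
          mul_le_mul_of_nonneg_right (le_abs_self _) (h0 p)
      _ ≤ |(p.1 : ℝ) - (p.2 : ℝ)| * π p := mul_le_mul_of_nonneg_right (hF _ _) (h0 p)
      _ = π p * |(p.1 : ℝ) - (p.2 : ℝ)| := mul_comm _ _

lemma sum_neg_fun (y : ℤ →₀ ℝ) (F : ℤ → ℝ) :
    (y.sum fun i v => (-F i) * v) = -(y.sum fun i v => F i * v) := by
  rw [Finsupp.sum, Finsupp.sum, ← Finset.sum_neg_distrib]
  exact Finset.sum_congr rfl fun i _ => by ring



def posZ (b j : ℕ) : ℤ := 2 * (j + 1) * 2 ^ b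

lemma posZ_cast (b j : ℕ) : ((posZ b j : ℤ) : ℝ) = 2 * ((j : ℝ) + 1) * 2 ^ b := by
  unfold posZ; push_cast; ring

lemma posZ_inj {b : ℕ} {j1 j2 : ℕ} (h : posZ b j1 = posZ b j2) : j1 = j2 := by
  unfold posZ at h
  have h2 : (0:ℤ) < 2 ^ b := by positivity
  have : (j1 : ℤ) = j2 := by
    nlinarith [h]
  exact_mod_cast this

noncomputable def sum_of_pairs {α : Type*} {n : ℕ} (p q : Fin n → α) (u v : Fin n → ℝ) :
    α →₀ ℝ :=
  ∑ j : Fin n, (Finsupp.single (p j) (u j) + Finsupp.single (q j) (v j))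

lemma sum_of_pairs_sum {α : Type*} {n : ℕ} (p q : Fin n → α) (u v : Fin n → ℝ)
    (f : α → ℝ → ℝ) (h0 : ∀ a, f a 0 = 0)
    (hadd : ∀ a u₁ u₂, f a (u₁ + u₂) = f a u₁ + f a u₂) :
    (sum_of_pairs p q u v).sum f = ∑ j : Fin n, (f (p j) (u j) + f (q j) (v j)) := by
  unfold sum_of_pairs
  rw [← Finsupp.sum_finset_sum_index h0 hadd]
  refine Finset.sum_congr rfl fun j _ => ?_
  rw [Finsupp.sum_add_index' h0 hadd, Finsupp.sum_single_index (h0 _),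
    Finsupp.sum_single_index (h0 _)]

lemma sum_of_pairs_apply {α : Type*} [DecidableEq α] {n : ℕ} (p q : Fin n → α)
    (u v : Fin n → ℝ) (z : α) :
    (sum_of_pairs p q u v) z
      = ∑ j : Fin n, ((if p j = z then u j else 0) + (if q j = z then v j else 0)) := by
  unfold sum_of_pairs
  rw [Finsupp.finset_sum_apply]
  refine Finset.sum_congr rfl fun j _ => ?_
  rw [Finsupp.add_apply, Finsupp.single_apply, Finsupp.single_apply]

lemma sum_of_pairs_card {α : Type*} [DecidableEq α] {n : ℕ} (p q : Fin n → α)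
    (u v : Fin n → ℝ) :
    (sum_of_pairs p q u v).support.card ≤ 2 * n := by
  unfold sum_of_pairs
  calc (∑ j : Fin n, (Finsupp.single (p j) (u j) + Finsupp.single (q j) (v j))).support.card
      ≤ (Finset.univ.biUnion fun j : Fin n =>
          (Finsupp.single (p j) (u j) + Finsupp.single (q j) (v j)).support).card :=
        Finset.card_le_card Finsupp.support_finset_sum
    _ ≤ ∑ j : Fin n, (Finsupp.single (p j) (u j) + Finsupp.single (q j) (v j)).support.card :=
        Finset.card_biUnion_le
    _ ≤ ∑ _j : Fin n, 2 := by
        refine Finset.sum_le_sum fun j _ => ?_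
        calc (Finsupp.single (p j) (u j) + Finsupp.single (q j) (v j)).support.card
            ≤ ((Finsupp.single (p j) (u j)).support ∪ (Finsupp.single (q j) (v j)).support).card :=
              Finset.card_le_card Finsupp.support_add
          _ ≤ (Finsupp.single (p j) (u j)).support.card
              + (Finsupp.single (q j) (v j)).support.card := Finset.card_union_le _ _
          _ ≤ 1 + 1 := by
              gcongr
              · exact (Finset.card_le_card Finsupp.support_single_subset).trans (by simp)
              · exact (Finset.card_le_card Finsupp.support_single_subset).trans (by simp)
          _ = 2 := rfl
    _ ≤ 2 * n := by
        rw [Finset.sum_const, Finset.card_univ, Fintype.card_fin, smul_eq_mul, Nat.mul_comm]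



noncomputable def eps {b n : ℕ} (t : Fin n → Fin b) (j : Fin n) : ℝ := ((2:ℝ) ^ (t j : ℕ))⁻¹

lemma eps_pos {b n : ℕ} (t : Fin n → Fin b) (j : Fin n) : 0 < eps t j := by
  unfold eps; positivity

lemma eps_le_one {b n : ℕ} (t : Fin n → Fin b) (j : Fin n) : eps t j ≤ 1 := by
  unfold eps
  rw [inv_le_one_iff₀]
  right
  exact one_le_pow₀ one_le_two

lemma eps_mul {b n : ℕ} (t : Fin n → Fin b) (j : Fin n) :
    eps t j * (2:ℝ) ^ (t j : ℕ) = 1 := by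
  unfold eps
  rw [inv_mul_cancel₀]
  positivity

noncomputable def Bm (b n : ℕ) (t : Fin n → Fin b) : ℤ →₀ ℝ :=
  sum_of_pairs (fun j => posZ b j) (fun j => posZ b j + 2 ^ (t j : ℕ))
    (fun j => 2 - eps t j) (eps t)

noncomputable def pim (b n : ℕ) (t : Fin n → Fin b) : (ℤ × ℤ) →₀ ℝ :=
  sum_of_pairs (fun j => (posZ b j, posZ b j))
    (fun j => (posZ b j, posZ b j + 2 ^ (t j : ℕ)))
    (fun j => 2 - eps t j) (eps t)

-- key separation
lemma key_sep {b n : ℕ} (hb : 2 ≤ b) (i j : Fin n) (hij : i ≠ j) (M : ℕ) (hM : M < b) (x : ℝ)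
    (hx1 : ((posZ b i : ℤ) : ℝ) ≤ x) (hx2 : x ≤ ((posZ b i : ℤ) : ℝ) + 2 ^ b / 2) :
    bump (((posZ b j : ℤ) : ℝ) + 2 ^ M) ((2:ℝ) ^ M / 2) x = 0 := by
  have hpi := posZ_cast b i
  have hpj := posZ_cast b j
  have h2b : (0:ℝ) < 2 ^ b := by positivity
  have h2M : (0:ℝ) < 2 ^ M := by positivity
  have hMb : (2:ℝ) ^ M * 2 ≤ 2 ^ b := by
    have : (2:ℝ) ^ (M + 1) ≤ 2 ^ b := pow_le_pow_right₀ one_le_two hM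
    rw [pow_succ] at this
    linarith
  have habs : (2:ℝ) ^ M / 2 ≤ |x - (((posZ b j : ℤ) : ℝ) + 2 ^ M)| := by
    rcases Nat.lt_or_ge (i : ℕ) (j : ℕ) with hlt | hge
    · -- i < j : c - x ≥ big
      have hji : ((i : ℕ) : ℝ) + 1 ≤ ((j : ℕ) : ℝ) := by exact_mod_cast hlt
      have : (2:ℝ) ^ M / 2 ≤ (((posZ b j : ℤ) : ℝ) + 2 ^ M) - x := by
        rw [hpi] at hx2
        rw [hpj]
        nlinarith
      calc (2:ℝ) ^ M / 2 ≤ (((posZ b j : ℤ) : ℝ) + 2 ^ M) - x := this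
        _ ≤ |(((posZ b j : ℤ) : ℝ) + 2 ^ M) - x| := le_abs_self _
        _ = |x - (((posZ b j : ℤ) : ℝ) + 2 ^ M)| := abs_sub_comm _ _
    · have hij' : (j : ℕ) < (i : ℕ) := by
        rcases Nat.lt_or_ge (j : ℕ) (i : ℕ) with h | h
        · exact h
        · exact absurd (Fin.ext (Nat.le_antisymm h hge)) hij
      have hji : ((j : ℕ) : ℝ) + 1 ≤ ((i : ℕ) : ℝ) := by exact_mod_cast hij'
      have : (2:ℝ) ^ M / 2 ≤ x - (((posZ b j : ℤ) : ℝ) + 2 ^ M) := by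
        rw [hpi] at hx1
        rw [hpj]
        nlinarith
      exact this.trans (le_abs_self _)
  exact max_eq_left (by linarith)


lemma mulG_zero (G : ℤ → ℝ) : ∀ a : ℤ, G a * (0:ℝ) = 0 := fun a => mul_zero _
lemma mulG_add (G : ℤ → ℝ) : ∀ (a : ℤ) (u₁ u₂ : ℝ), G a * (u₁ + u₂) = G a * u₁ + G a * u₂ :=
  fun a u₁ u₂ => mul_add _ _ _

lemma key_diff (b n : ℕ) (hb : 2 ≤ b) (t t' : Fin n → Fin b) :
    ∃ G : ℤ → ℝ,
      (∀ i j : ℤ, |G i - G j| ≤ |(i : ℝ) - (j : ℝ)|) ∧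
      ((Bm b n t).sum fun i v => G i * v) - ((Bm b n t').sum fun i v => G i * v)
        = ((Finset.univ.filter fun j : Fin n => t j ≠ t' j).card : ℝ) / 2 := by
  classical
  set Dset : Finset (Fin n) := Finset.univ.filter fun j => t j ≠ t' j with hDset
  set M : Fin n → ℕ := fun j => max (t j : ℕ) (t' j : ℕ) with hM
  set σ : Fin n → ℝ := fun j => if (t' j : ℕ) ≤ (t j : ℕ) then 1 else -1 with hσ
  set cc : Fin n → ℝ := fun j => ((posZ b (j : ℕ) : ℤ) : ℝ) + 2 ^ (M j) with hcc
  set hh : Fin n → ℝ := fun j => (2:ℝ) ^ (M j) / 2 with hhh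
  have hMlt : ∀ j : Fin n, M j < b := fun j => max_lt (t j).isLt (t' j).isLt
  have h2b : (0:ℝ) < 2 ^ b := by positivity
  have hMb : ∀ j : Fin n, (2:ℝ) ^ (M j) * 2 ≤ 2 ^ b := by
    intro j
    have : (2:ℝ) ^ (M j + 1) ≤ 2 ^ b := pow_le_pow_right₀ one_le_two (hMlt j)
    rw [pow_succ] at this
    linarith
  set G : ℤ → ℝ := fun z => ∑ j ∈ Dset, σ j * bump (cc j) (hh j) ((z : ℤ) : ℝ) with hG
  have hσ1 : ∀ j ∈ Dset, |σ j| ≤ 1 := by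
    intro j _
    simp only [hσ]
    split_ifs <;> norm_num
  have hLip : ∀ i j : ℤ, |G i - G j| ≤ |(i : ℝ) - (j : ℝ)| := by
    intro i j
    refine lip_sum Dset σ cc hh hσ1 ?_ _ _
    intro i' hi' j' hj' hij'
    have hvne : (i' : ℕ) ≠ (j' : ℕ) := fun e => hij' (Fin.ext e)
    have hp := posZ_cast b (i' : ℕ)
    have hq := posZ_cast b (j' : ℕ)
    have h2i : (0:ℝ) < 2 ^ (M i') := by positivity
    have h2j : (0:ℝ) < 2 ^ (M j') := by positivity
    rcases Nat.lt_or_ge (i' : ℕ) (j' : ℕ) with hlt | hge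
    · left
      have hji : ((i' : ℕ) : ℝ) + 1 ≤ ((j' : ℕ) : ℝ) := by exact_mod_cast hlt
      rw [hcc, hhh]
      simp only
      rw [hp, hq]
      nlinarith [hMb i', hMb j']
    · right
      have hij2 : (j' : ℕ) < (i' : ℕ) := by omega
      have hji : ((j' : ℕ) : ℝ) + 1 ≤ ((i' : ℕ) : ℝ) := by exact_mod_cast hij2
      rw [hcc, hhh]
      simp only
      rw [hp, hq]
      nlinarith [hMb i', hMb j']
  refine ⟨G, hLip, ?_⟩
  have hsum : ∀ s : Fin n → Fin b, ((Bm b n s).sum fun i v => G i * v)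
      = ∑ j : Fin n, ((2 - eps s j) * G (posZ b (j:ℕ)) + eps s j * G (posZ b (j:ℕ) + 2 ^ (s j : ℕ))) := by
    intro s
    unfold Bm
    rw [sum_of_pairs_sum _ _ _ _ _ (mulG_zero G) (mulG_add G)]
    refine Finset.sum_congr rfl fun j _ => ?_
    ring
  rw [hsum t, hsum t', ← Finset.sum_sub_distrib]
  -- pointwise evaluation lemmas
  have hGpos : ∀ j : Fin n, G (posZ b (j:ℕ)) = 0 := by
    intro j
    simp only [hG]
    refine Finset.sum_eq_zero fun i hi => ?_
    by_cases hij : i = j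
    · subst hij
      have : bump (cc i) (hh i) ((posZ b (i:ℕ) : ℤ) : ℝ) = 0 := by
        refine max_eq_left ?_
        rw [hcc, hhh]
        simp only
        have : |((posZ b (i:ℕ) : ℤ) : ℝ) - (((posZ b (i:ℕ) : ℤ) : ℝ) + 2 ^ (M i))|
            = 2 ^ (M i) := by
          rw [show ((posZ b (i:ℕ) : ℤ) : ℝ) - (((posZ b (i:ℕ) : ℤ) : ℝ) + 2 ^ (M i))
            = -(2 ^ (M i)) by ring, abs_neg, abs_of_pos (by positivity)]
        rw [this]
        have h2i : (0:ℝ) < 2 ^ (M i) := by positivity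
        linarith
      rw [this, mul_zero]
    · have : bump (cc i) (hh i) ((posZ b (j:ℕ) : ℤ) : ℝ) = 0 := by
        rw [hcc, hhh]
        exact key_sep hb j i (fun e => hij (e.symm)) (M i) (hMlt i) _ (le_refl _)
          (by linarith)
      rw [this, mul_zero]
  have hGshift0 : ∀ (j : Fin n) (s : ℕ), s < b → j ∉ Dset →
      G (posZ b (j:ℕ) + 2 ^ s) = 0 := by
    intro j s hs hj
    simp only [hG]
    refine Finset.sum_eq_zero fun i hi => ?_
    have hij : i ≠ j := fun e => hj (e ▸ hi)
    have hcast : ((posZ b (j:ℕ) + 2 ^ s : ℤ) : ℝ) = ((posZ b (j:ℕ) : ℤ) : ℝ) + 2 ^ s := by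
      push_cast; ring
    have hsle : (2:ℝ) ^ s * 2 ≤ 2 ^ b := by
      have : (2:ℝ) ^ (s + 1) ≤ 2 ^ b := pow_le_pow_right₀ one_le_two hs
      rw [pow_succ] at this; linarith
    have : bump (cc i) (hh i) (((posZ b (j:ℕ) + 2 ^ s : ℤ) : ℝ)) = 0 := by
      rw [hcc, hhh, hcast]
      refine key_sep hb j i (fun e => hij (e.symm)) (M i) (hMlt i) _ ?_ ?_
      · have : (0:ℝ) < 2 ^ s := by positivity
        linarith
      · linarith
    rw [this, mul_zero]
  have hGown : ∀ j : Fin n, j ∈ Dset →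
      G (posZ b (j:ℕ) + 2 ^ (M j)) = σ j * ((2:ℝ) ^ (M j) / 2) := by
    intro j hj
    simp only [hG]
    rw [Finset.sum_eq_single_of_mem j hj ?side]
    case side =>
      intro i hi hij
      have hcast : ((posZ b (j:ℕ) + 2 ^ (M j) : ℤ) : ℝ) = ((posZ b (j:ℕ) : ℤ) : ℝ) + 2 ^ (M j) := by
        push_cast; ring
      have : bump (cc i) (hh i) (((posZ b (j:ℕ) + 2 ^ (M j) : ℤ) : ℝ)) = 0 := by
        rw [hcc, hhh, hcast]
        refine key_sep hb j i (fun e => hij (e.symm)) (M i) (hMlt i) _ ?_ ?_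
        · have : (0:ℝ) < 2 ^ (M j) := by positivity
          linarith
        · have := hMb j
          linarith
      rw [this, mul_zero]
    have hcast : ((posZ b (j:ℕ) + 2 ^ (M j) : ℤ) : ℝ) = cc j := by
      rw [hcc]; push_cast; ring
    rw [hcast]
    have : bump (cc j) (hh j) (cc j) = hh j := by
      unfold bump
      rw [sub_self, abs_zero, sub_zero]
      refine max_eq_right ?_
      rw [hhh]; positivity
    rw [this, hhh]
  have hGsmall : ∀ j : Fin n, j ∈ Dset → ∀ s : ℕ, s < M j →
      G (posZ b (j:ℕ) + 2 ^ s) = 0 := by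
    intro j hj s hs
    simp only [hG]
    refine Finset.sum_eq_zero fun i hi => ?_
    by_cases hij : i = j
    · subst hij
      have hcast : ((posZ b (i:ℕ) + 2 ^ s : ℤ) : ℝ) = ((posZ b (i:ℕ) : ℤ) : ℝ) + 2 ^ s := by
        push_cast; ring
      have h2s : (2:ℝ) ^ s * 2 ≤ 2 ^ (M i) := by
        have : (2:ℝ) ^ (s + 1) ≤ 2 ^ (M i) := pow_le_pow_right₀ one_le_two hs
        rw [pow_succ] at this; linarith
      have : bump (cc i) (hh i) (((posZ b (i:ℕ) + 2 ^ s : ℤ) : ℝ)) = 0 := by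
        rw [hcc, hhh, hcast]
        refine max_eq_left ?_
        have habs : |(((posZ b (i:ℕ) : ℤ) : ℝ) + 2 ^ s) - (((posZ b (i:ℕ) : ℤ) : ℝ) + 2 ^ (M i))|
            = 2 ^ (M i) - 2 ^ s := by
          rw [show (((posZ b (i:ℕ) : ℤ) : ℝ) + 2 ^ s) - (((posZ b (i:ℕ) : ℤ) : ℝ) + 2 ^ (M i))
            = -(2 ^ (M i) - 2 ^ s) by ring, abs_neg, abs_of_pos (by nlinarith [pow_pos (zero_lt_two' ℝ) s])]
        rw [habs]
        nlinarith [pow_pos (zero_lt_two' ℝ) s]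
      rw [this, mul_zero]
    · have hcast : ((posZ b (j:ℕ) + 2 ^ s : ℤ) : ℝ) = ((posZ b (j:ℕ) : ℤ) : ℝ) + 2 ^ s := by
        push_cast; ring
      have hsb : s < b := lt_trans hs (hMlt j)
      have hsle : (2:ℝ) ^ s * 2 ≤ 2 ^ b := by
        have : (2:ℝ) ^ (s + 1) ≤ 2 ^ b := pow_le_pow_right₀ one_le_two hsb
        rw [pow_succ] at this; linarith
      have : bump (cc i) (hh i) (((posZ b (j:ℕ) + 2 ^ s : ℤ) : ℝ)) = 0 := by
        rw [hcc, hhh, hcast]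
        refine key_sep hb j i (fun e => hij (e.symm)) (M i) (hMlt i) _ ?_ ?_
        · have : (0:ℝ) < 2 ^ s := by positivity
          linarith
        · linarith
      rw [this, mul_zero]
  -- termwise computation
  have hterm : ∀ j : Fin n,
      ((2 - eps t j) * G (posZ b (j:ℕ)) + eps t j * G (posZ b (j:ℕ) + 2 ^ (t j : ℕ)))
      - ((2 - eps t' j) * G (posZ b (j:ℕ)) + eps t' j * G (posZ b (j:ℕ) + 2 ^ (t' j : ℕ)))
      = if t j ≠ t' j then (1:ℝ)/2 else 0 := by
    intro j
    rw [hGpos j]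
    by_cases hj : t j = t' j
    · have he : eps t j = eps t' j := by unfold eps; rw [hj]
      rw [if_neg (by simpa using hj), hj, he]
      ring
    · have hjD : j ∈ Dset := by
        rw [hDset]; simp [hj]
      rw [if_pos hj]
      have hvne : (t j : ℕ) ≠ (t' j : ℕ) := fun e => hj (Fin.ext e)
      rcases Nat.lt_or_ge (t' j : ℕ) (t j : ℕ) with hlt | hge
      · have hMj : M j = (t j : ℕ) := max_eq_left hlt.le
        have hσj : σ j = 1 := if_pos hlt.le
        have h1 : G (posZ b (j:ℕ) + 2 ^ (t j : ℕ)) = (2:ℝ) ^ (t j : ℕ) / 2 := by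
          have := hGown j hjD
          rw [hMj] at this
          rw [this, hσj, one_mul]
        have h2 : G (posZ b (j:ℕ) + 2 ^ (t' j : ℕ)) = 0 := by
          refine hGsmall j hjD _ ?_
          rw [hMj]; exact hlt
        rw [h1, h2, mul_zero]
        have := eps_mul t j
        field_simp
        nlinarith [eps_mul t j]
      · have hlt2 : (t j : ℕ) < (t' j : ℕ) := by omega
        have hMj : M j = (t' j : ℕ) := max_eq_right hlt2.le
        have hσj : σ j = -1 := if_neg (by omega)
        have h1 : G (posZ b (j:ℕ) + 2 ^ (t j : ℕ)) = 0 := by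
          refine hGsmall j hjD _ ?_
          rw [hMj]; exact hlt2
        have h2 : G (posZ b (j:ℕ) + 2 ^ (t' j : ℕ)) = -((2:ℝ) ^ (t' j : ℕ) / 2) := by
          have := hGown j hjD
          rw [hMj] at this
          rw [this, hσj]
          ring
        rw [h1, h2, mul_zero]
        have := eps_mul t' j
        nlinarith [eps_mul t' j]
  rw [Finset.sum_congr rfl (fun j _ => hterm j)]
  rw [Finset.sum_ite, Finset.sum_const, Finset.sum_const_zero, add_zero]
  rw [hDset]
  simp only [nsmul_eq_mul]
  ring


lemma ite_zero_zero (P : Prop) [Decidable P] : (if P then (0:ℝ) else 0) = 0 := by split_ifs <;> rfl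

lemma Bm_nonneg (b n : ℕ) (t : Fin n → Fin b) : ∀ z, 0 ≤ Bm b n t z := by
  intro z
  unfold Bm
  rw [sum_of_pairs_apply]
  refine Finset.sum_nonneg fun j _ => add_nonneg ?_ ?_
  · split_ifs
    · have := eps_le_one t j; linarith
    · exact le_refl 0
  · split_ifs
    · exact (eps_pos t j).le
    · exact le_refl 0

lemma Bm_mass (b n : ℕ) (t : Fin n → Fin b) :
    ((Bm b n t).sum fun _ v => v) = 2 * n := by
  unfold Bm
  rw [sum_of_pairs_sum _ _ _ _ _ (fun _ => rfl) (fun _ _ _ => rfl)]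
  have : ∀ j : Fin n, (2 - eps t j) + eps t j = (2:ℝ) := fun j => by ring
  rw [Finset.sum_congr rfl fun j _ => this j, Finset.sum_const, Finset.card_univ,
    Fintype.card_fin, nsmul_eq_mul]
  ring

lemma Bm_card (b n : ℕ) (t : Fin n → Fin b) : (Bm b n t).support.card ≤ 2 * n :=
  sum_of_pairs_card _ _ _ _

lemma pim_nonneg (b n : ℕ) (t : Fin n → Fin b) : ∀ p, 0 ≤ pim b n t p := by
  intro p
  unfold pim
  rw [sum_of_pairs_apply]
  refine Finset.sum_nonneg fun j _ => add_nonneg ?_ ?_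
  · split_ifs
    · have := eps_le_one t j; linarith
    · exact le_refl 0
  · split_ifs
    · exact (eps_pos t j).le
    · exact le_refl 0

lemma pim_fst (b n : ℕ) (t : Fin n → Fin b) (i : ℤ) :
    ((pim b n t).sum fun p v => if p.1 = i then v else 0)
      = ∑ j : Fin n, (if posZ b (j : ℕ) = i then (2:ℝ) else 0) := by
  unfold pim
  rw [sum_of_pairs_sum _ _ _ _ (fun (p : ℤ × ℤ) (v : ℝ) => if p.1 = i then v else 0)
    (fun a => ite_zero_zero _) (fun a u₁ u₂ => by split_ifs <;> simp)]
  refine Finset.sum_congr rfl fun j _ => ?_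
  simp only
  split_ifs <;> ring

lemma pim_snd (b n : ℕ) (t : Fin n → Fin b) (i : ℤ) :
    ((pim b n t).sum fun p v => if p.2 = i then v else 0) = Bm b n t i := by
  unfold pim Bm
  rw [sum_of_pairs_sum _ _ _ _ (fun (p : ℤ × ℤ) (v : ℝ) => if p.2 = i then v else 0)
    (fun a => ite_zero_zero _) (fun a u₁ u₂ => by split_ifs <;> simp), sum_of_pairs_apply]

lemma pim_cost (b n : ℕ) (t : Fin n → Fin b) :
    ((pim b n t).sum fun p v => v * |((p.1 : ℤ) : ℝ) - ((p.2 : ℤ) : ℝ)|) = n := by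
  unfold pim
  rw [sum_of_pairs_sum _ _ _ _ (fun (p : ℤ × ℤ) (v : ℝ) => v * |((p.1 : ℤ) : ℝ) - ((p.2 : ℤ) : ℝ)|)
    (fun a => zero_mul _) (fun a u₁ u₂ => by simp [add_mul])]
  have : ∀ j : Fin n,
      ((2 - eps t j) * |((posZ b (j:ℕ) : ℤ) : ℝ) - ((posZ b (j:ℕ) : ℤ) : ℝ)|
        + eps t j * |((posZ b (j:ℕ) : ℤ) : ℝ) - ((posZ b (j:ℕ) + 2 ^ (t j : ℕ) : ℤ) : ℝ)|)
      = 1 := by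
    intro j
    rw [sub_self, abs_zero, mul_zero, zero_add]
    have hc : ((posZ b (j:ℕ) : ℤ) : ℝ) - ((posZ b (j:ℕ) + 2 ^ (t j : ℕ) : ℤ) : ℝ)
        = -(2 ^ (t j : ℕ)) := by push_cast; ring
    rw [hc, abs_neg, abs_of_pos (by positivity)]
    exact eps_mul t j
  rw [Finset.sum_congr rfl fun j _ => this j, Finset.sum_const, Finset.card_univ,
    Fintype.card_fin, nsmul_eq_mul, mul_one]

lemma ball_card {n b r : ℕ} (hb : 1 ≤ b) (t0 : Fin n → Fin b) :
    (Finset.univ.filter fun t : Fin n → Fin b =>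
      (Finset.univ.filter fun j => t j ≠ t0 j).card ≤ r).card ≤ 2 ^ n * b ^ r := by
  classical
  set T := (Finset.univ : Finset (Finset (Fin n))).filter fun S => S.card ≤ r with hT
  have hsub : (Finset.univ.filter fun t : Fin n → Fin b =>
      (Finset.univ.filter fun j => t j ≠ t0 j).card ≤ r)
      ⊆ T.biUnion fun S => Finset.univ.filter fun t : Fin n → Fin b =>
          ∀ j ∉ S, t j = t0 j := by
    intro t ht
    rw [Finset.mem_filter] at ht
    refine Finset.mem_biUnion.mpr ⟨Finset.univ.filter fun j => t j ≠ t0 j, ?_, ?_⟩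
    · rw [hT, Finset.mem_filter]
      exact ⟨Finset.mem_univ _, ht.2⟩
    · rw [Finset.mem_filter]
      refine ⟨Finset.mem_univ _, fun j hj => ?_⟩
      by_contra hne
      exact hj (Finset.mem_filter.mpr ⟨Finset.mem_univ _, hne⟩)
  have hA : ∀ S : Finset (Fin n), S.card ≤ r →
      (Finset.univ.filter fun t : Fin n → Fin b => ∀ j ∉ S, t j = t0 j).card ≤ b ^ r := by
    intro S hS
    have hinj : (Finset.univ.filter fun t : Fin n → Fin b => ∀ j ∉ S, t j = t0 j).card
        ≤ (Finset.univ : Finset ({x // x ∈ S} → Fin b)).card := by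
      refine Finset.card_le_card_of_injOn (fun t => fun j : {x // x ∈ S} => t (j : Fin n))
        (fun _ _ => Finset.mem_univ _) ?_
      intro t1 h1 t2 h2 he
      rw [Finset.coe_filter] at h1 h2
      simp only [Set.mem_setOf_eq] at h1 h2
      funext j
      by_cases hjS : j ∈ S
      · exact congrFun he ⟨j, hjS⟩
      · rw [h1.2 j hjS, h2.2 j hjS]
    calc (Finset.univ.filter fun t : Fin n → Fin b => ∀ j ∉ S, t j = t0 j).card
        ≤ (Finset.univ : Finset ({x // x ∈ S} → Fin b)).card := hinj
      _ = b ^ S.card := by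
          rw [Finset.card_univ, Fintype.card_fun, Fintype.card_fin, Fintype.card_coe]
      _ ≤ b ^ r := Nat.pow_le_pow_right hb hS
  calc (Finset.univ.filter fun t : Fin n → Fin b =>
        (Finset.univ.filter fun j => t j ≠ t0 j).card ≤ r).card
      ≤ (T.biUnion fun S => Finset.univ.filter fun t : Fin n → Fin b =>
          ∀ j ∉ S, t j = t0 j).card := Finset.card_le_card hsub
    _ ≤ ∑ S ∈ T, (Finset.univ.filter fun t : Fin n → Fin b => ∀ j ∉ S, t j = t0 j).card :=
        Finset.card_biUnion_le
    _ ≤ ∑ _S ∈ T, b ^ r := by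
        refine Finset.sum_le_sum fun S hS => ?_
        rw [hT, Finset.mem_filter] at hS
        exact hA S hS.2
    _ = T.card * b ^ r := by rw [Finset.sum_const, smul_eq_mul]
    _ ≤ 2 ^ n * b ^ r := by
        have : T.card ≤ 2 ^ n := by
          calc T.card ≤ (Finset.univ : Finset (Finset (Fin n))).card :=
                Finset.card_le_card (Finset.filter_subset _ _)
            _ = 2 ^ n := by rw [Finset.card_univ, Fintype.card_finset, Fintype.card_fin]
        exact Nat.mul_le_mul_right _ this


end Stmt17

open Stmt17 in
/-- Covering/doubling lower bound for `k`-sparse measures on the line under EMD: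
with `A` placing mass `2` at each point `2jΔ/k`, `j = 1, …, k/2`, any family `𝒞` of
nonnegative measures of total mass `k` and support size at most `k` whose `EMD`-balls of
radius `k/200` cover the `EMD`-ball of radius `k/2` around `A` (within measures of total
mass `k` and support size at most `k`) must satisfy
`|𝒞| ≥ (log₂(Δ/k))^{9k/20} / 2^k`. -/
theorem stmt_17 (k Δ : ℕ) (hk2 : 2 ≤ k) (hkeven : Even k)
    (hΔpow : ∃ a : ℕ, Δ = 2 ^ a)
    (hdiv : ∃ b : ℕ, 1 ≤ b ∧ Δ = k * 2 ^ b)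
    (hΔ4k : 4 * k ≤ Δ)
    (A : ℤ →₀ ℝ)
    (hA : ∀ z : ℤ, A z =
      if z ∈ (Finset.Icc 1 (k / 2)).image (fun j : ℕ => ((2 * j * (Δ / k) : ℕ) : ℤ))
        then 2 else 0)
    (𝒞 : Finset (ℤ →₀ ℝ))
    (h𝒞 : ∀ c ∈ 𝒞, (∀ z, 0 ≤ c z) ∧ (c.sum fun _ v => v) = (k : ℝ) ∧
      c.support.card ≤ k)
    (hcover : ∀ B : ℤ →₀ ℝ, (∀ z, 0 ≤ B z) → (B.sum fun _ v => v) = (k : ℝ) →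
      B.support.card ≤ k → EMDZ A B ≤ (k : ℝ) / 2 →
      ∃ c ∈ 𝒞, EMDZ B c ≤ (k : ℝ) / 200) :
    (Real.logb 2 ((Δ : ℝ) / k)) ^ ((9 * (k : ℝ)) / 20) / 2 ^ k ≤ (𝒞.card : ℝ) := by
  classical
  obtain ⟨b, hb1, hΔ⟩ := hdiv
  have hk0 : 0 < k := by omega
  obtain ⟨m, hm⟩ := hkeven
  set n := k / 2 with hn
  have hkn : k = 2 * n := by omega
  have hn1 : 1 ≤ n := by omega
  have hb2 : 2 ≤ b := by
    by_contra h
    push_neg at h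
    have hble : 2 ^ b ≤ 2 := by interval_cases b <;> norm_num
    rw [hΔ] at hΔ4k
    nlinarith
  have hDk : Δ / k = 2 ^ b := by rw [hΔ]; exact Nat.mul_div_cancel_left _ hk0
  -- indicator sum equals A
  have hAind : ∀ i : ℤ, (∑ j : Fin n, (if posZ b (j : ℕ) = i then (2:ℝ) else 0)) = A i := by
    intro i
    rw [hA i]
    by_cases hex : ∃ j : Fin n, posZ b (j : ℕ) = i
    · obtain ⟨j0, hj0⟩ := hex
      have h0 : ∀ j ∈ Finset.univ, j ≠ j0 → (if posZ b (j : ℕ) = i then (2:ℝ) else 0) = 0 := by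
        intro j _ hjne
        rw [if_neg]
        intro he
        exact hjne (Fin.ext (posZ_inj (he.trans hj0.symm)))
      rw [Finset.sum_eq_single_of_mem j0 (Finset.mem_univ _) h0, if_pos hj0, if_pos]
      refine Finset.mem_image.mpr ⟨(j0 : ℕ) + 1, ?_, ?_⟩
      · rw [Finset.mem_Icc]
        have := j0.isLt
        omega
      · rw [hDk, ← hj0]
        unfold posZ
        push_cast
        ring
    · push_neg at hex
      rw [Finset.sum_eq_zero (fun j _ => if_neg (hex j)), if_neg]
      intro hmem
      obtain ⟨j, hjI, hje⟩ := Finset.mem_image.mp hmem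
      rw [Finset.mem_Icc] at hjI
      rw [hDk] at hje
      refine hex ⟨j - 1, by omega⟩ ?_
      rw [← hje]
      unfold posZ
      have hj1 : 1 ≤ j := hjI.1
      push_cast [Nat.cast_sub hj1]
      ring
  have hnk : ((n : ℕ) : ℝ) = (k : ℝ) / 2 := by
    rw [hkn]; push_cast; ring
  have hmassB : ∀ t : Fin n → Fin b, ((Bm b n t).sum fun _ v => v) = (k : ℝ) := by
    intro t
    rw [Bm_mass, hkn]
    push_cast
    ring
  have hcardB : ∀ t : Fin n → Fin b, (Bm b n t).support.card ≤ k := by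
    intro t
    rw [hkn]
    exact Bm_card b n t
  have hAB : ∀ t : Fin n → Fin b, EMDZ A (Bm b n t) ≤ (k : ℝ) / 2 := by
    intro t
    have h := emdz_le A (Bm b n t) (pim b n t) (pim_nonneg b n t)
      (fun i => by rw [pim_fst]; exact hAind i) (fun j => pim_snd b n t j)
    rw [pim_cost, hnk] at h
    exact h
  have hch : ∀ t : Fin n → Fin b, ∃ c ∈ 𝒞, EMDZ (Bm b n t) c ≤ (k : ℝ) / 200 :=
    fun t => hcover _ (Bm_nonneg b n t) (hmassB t) (hcardB t) (hAB t)
  choose φ hφmem hφd using hch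
  set r := k / 50 with hr
  have hkR : (0:ℝ) < (k : ℝ) := by exact_mod_cast hk0
  have hfib : ∀ t t' : Fin n → Fin b, φ t = φ t' →
      (Finset.univ.filter fun j => t j ≠ t' j).card ≤ r := by
    intro t t' he
    obtain ⟨G, hLip, hdiff⟩ := key_diff b n hb2 t t'
    obtain ⟨hc0, hcmass, -⟩ := h𝒞 (φ t) (hφmem t)
    have h1 : ((Bm b n t).sum fun i v => G i * v) - ((φ t).sum fun i v => G i * v)
        ≤ EMDZ (Bm b n t) (φ t) :=
      dual_le_emdz _ _ G k hkR (Bm_nonneg b n t) hc0 (hmassB t) hcmass hLip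
    have h2 : ((φ t).sum fun i v => G i * v) - ((Bm b n t').sum fun i v => G i * v)
        ≤ EMDZ (Bm b n t') (φ t) := by
      have h3 := dual_le_emdz (Bm b n t') (φ t) (fun i => -G i) k hkR (Bm_nonneg b n t')
        hc0 (hmassB t') hcmass
        (fun i j => by
          rw [show -G i - -G j = -(G i - G j) by ring, abs_neg]
          exact hLip i j)
      rw [sum_neg_fun, sum_neg_fun] at h3
      linarith
    have hd1 := hφd t
    have hd2 := hφd t'
    rw [← he] at hd2
    have hhalf : ((Finset.univ.filter fun j => t j ≠ t' j).card : ℝ) / 2 ≤ (k : ℝ) / 100 := by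
      rw [← hdiff]
      linarith
    have h50 : 50 * (Finset.univ.filter fun j => t j ≠ t' j).card ≤ k := by
      have : (50:ℝ) * ((Finset.univ.filter fun j => t j ≠ t' j).card : ℝ) ≤ (k : ℝ) := by
        linarith
      exact_mod_cast this
    omega
  have hcount : b ^ n ≤ 𝒞.card * (2 ^ n * b ^ r) := by
    have hfiber : ∀ c ∈ 𝒞,
        (Finset.univ.filter fun t : Fin n → Fin b => φ t = c).card ≤ 2 ^ n * b ^ r := by
      intro c hc
      rcases Finset.eq_empty_or_nonempty
          (Finset.univ.filter fun t : Fin n → Fin b => φ t = c) with he | ⟨t0, ht0⟩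
      · rw [he, Finset.card_empty]
        exact Nat.zero_le _
      · have ht0' := (Finset.mem_filter.mp ht0).2
        have hsub2 : (Finset.univ.filter fun t : Fin n → Fin b => φ t = c)
            ⊆ Finset.univ.filter fun t : Fin n → Fin b =>
              (Finset.univ.filter fun j => t j ≠ t0 j).card ≤ r := by
          intro t ht
          rw [Finset.mem_filter] at ht ⊢
          exact ⟨Finset.mem_univ _, hfib t t0 (ht.2.trans ht0'.symm)⟩
        exact le_trans (Finset.card_le_card hsub2) (ball_card (by omega) t0)
    have hsub : (Finset.univ : Finset (Fin n → Fin b)) ⊆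
        𝒞.biUnion fun c => Finset.univ.filter fun t : Fin n → Fin b => φ t = c := by
      intro t _
      exact Finset.mem_biUnion.mpr ⟨φ t, hφmem t,
        Finset.mem_filter.mpr ⟨Finset.mem_univ _, rfl⟩⟩
    calc b ^ n = (Finset.univ : Finset (Fin n → Fin b)).card := by
          rw [Finset.card_univ, Fintype.card_fun, Fintype.card_fin, Fintype.card_fin]
      _ ≤ (𝒞.biUnion fun c => Finset.univ.filter fun t : Fin n → Fin b => φ t = c).card :=
          Finset.card_le_card hsub
      _ ≤ ∑ c ∈ 𝒞, (Finset.univ.filter fun t : Fin n → Fin b => φ t = c).card :=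
          Finset.card_biUnion_le
      _ ≤ ∑ _c ∈ 𝒞, 2 ^ n * b ^ r := Finset.sum_le_sum hfiber
      _ = 𝒞.card * (2 ^ n * b ^ r) := by rw [Finset.sum_const, smul_eq_mul]
  have hrn : r ≤ n := by
    rw [hr, hn]
    exact Nat.div_le_div_left (by norm_num) (by norm_num)
  have hbR : (0:ℝ) < (b : ℝ) := by
    have : 0 < b := by omega
    exact_mod_cast this
  have hC : (b : ℝ) ^ (n - r) / 2 ^ n ≤ (𝒞.card : ℝ) := by
    have hcast : ((b : ℝ)) ^ n ≤ (𝒞.card : ℝ) * (2 ^ n * (b : ℝ) ^ r) := by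
      exact_mod_cast hcount
    rw [div_le_iff₀ (by positivity)]
    have hbr : (0:ℝ) < (b : ℝ) ^ r := by positivity
    have heq : (b : ℝ) ^ (n - r) * (b : ℝ) ^ r = (b : ℝ) ^ n := by
      rw [← pow_add, Nat.sub_add_cancel hrn]
    nlinarith
  have hlogb : Real.logb 2 ((Δ : ℝ) / (k : ℝ)) = (b : ℝ) := by
    have hΔR : (Δ : ℝ) = (k : ℝ) * 2 ^ b := by exact_mod_cast congrArg (Nat.cast : ℕ → ℝ) hΔ
    have : (Δ : ℝ) / (k : ℝ) = 2 ^ b := by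
      rw [hΔR]
      field_simp
    rw [this, Real.logb_pow, Real.logb_self_eq_one (by norm_num), mul_one]
  rw [hlogb]
  have hexp : ((9 * (k : ℝ)) / 20) ≤ ((n - r : ℕ) : ℝ) := by
    have h1 : ((n - r : ℕ) : ℝ) = (n : ℝ) - (r : ℝ) := by
      rw [Nat.cast_sub hrn]
    have h2 : (r : ℝ) ≤ (k : ℝ) / 50 := by
      rw [hr]
      calc ((k / 50 : ℕ) : ℝ) ≤ (k : ℝ) / ((50 : ℕ) : ℝ) := Nat.cast_div_le
        _ = (k : ℝ) / 50 := by norm_num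
    linarith [hnk]
  have hb1R : (1:ℝ) ≤ (b : ℝ) := by
    have : 1 ≤ b := by omega
    exact_mod_cast this
  have h2n2k : (2:ℝ) ^ n ≤ 2 ^ k := by
    refine pow_le_pow_right₀ one_le_two ?_
    omega
  calc (b : ℝ) ^ ((9 * (k : ℝ)) / 20) / 2 ^ k
      ≤ (b : ℝ) ^ (((n - r : ℕ)) : ℝ) / 2 ^ k := by
        have h := Real.rpow_le_rpow_of_exponent_le hb1R hexp
        gcongr
      _ = (b : ℝ) ^ (n - r) / 2 ^ k := by rw [Real.rpow_natCast]
      _ ≤ (b : ℝ) ^ (n - r) / 2 ^ n := by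
        have hnum : (0:ℝ) ≤ (b : ℝ) ^ (n - r) := by positivity
        have h2npos : (0:ℝ) < 2 ^ n := by positivity
        gcongr
      _ ≤ (𝒞.card : ℝ) := hC
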